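/- For single-qubit commuting states ρ(s) = diag(s, 1-s) and ρ(r) = diag(r, 1-r) with r, s ∈ [0,1], the optimal quantum transport cost with projective cost C = (1/2)(I - S) satisfies T^Q(ρ(s), ρ(r)) ≥ (1/2) max{(√r - √s)², (√(1-r) - √(1-s))²}, as witnessed by the dual feasible pairs obtained from the diagonal matrices σ^A = diag(a₁, a₂), σ^B = diag(b₁, b₂) with C - σ^A ⊗ I - I ⊗ σ^B ≥ 0 chosen appropriately. -/

import Mathlib

open Matrix Complex
open scoped Matrix Kronecker ComplexOrder

noncomputable section

/-- Partial trace over the second factor. -/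
def ptraceB {N : ℕ} (ρ : Matrix (Fin N × Fin N) (Fin N × Fin N) ℂ) :
    Matrix (Fin N) (Fin N) ℂ :=
  Matrix.of fun i j => ∑ k, ρ (i, k) (j, k)

/-- Partial trace over the first factor. -/
def ptraceA {N : ℕ} (ρ : Matrix (Fin N × Fin N) (Fin N × Fin N) ℂ) :
    Matrix (Fin N) (Fin N) ℂ :=
  Matrix.of fun i j => ∑ k, ρ (k, i) (k, j)

/-- A density matrix: positive semidefinite with unit trace. -/
def IsDensity {n : Type*} [Fintype n] (ρ : Matrix n n ℂ) : Prop :=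
  ρ.PosSemidef ∧ ρ.trace = 1

/-- The set of couplings of two states. -/
def couplings {N : ℕ} (ρA ρB : Matrix (Fin N) (Fin N) ℂ) :
    Set (Matrix (Fin N × Fin N) (Fin N × Fin N) ℂ) :=
  {ρ | IsDensity ρ ∧ ptraceB ρ = ρA ∧ ptraceA ρ = ρB}

/-- The swap operator on `ℂ^N ⊗ ℂ^N`. -/
def swapOp (N : ℕ) : Matrix (Fin N × Fin N) (Fin N × Fin N) ℂ :=
  Matrix.of fun p q => if p.1 = q.2 ∧ p.2 = q.1 then 1 else 0

/-- The projective quantum cost matrix `C = (1/2)(I - S)`. -/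
def projCost (N : ℕ) : Matrix (Fin N × Fin N) (Fin N × Fin N) ℂ :=
  (1 / 2 : ℂ) • ((1 : Matrix (Fin N × Fin N) (Fin N × Fin N) ℂ) - swapOp N)

/-- The optimal quantum transport cost for a cost matrix `C`. -/
def TQ {N : ℕ} (C : Matrix (Fin N × Fin N) (Fin N × Fin N) ℂ)
    (ρA ρB : Matrix (Fin N) (Fin N) ℂ) : ℝ :=
  sInf {x : ℝ | ∃ ρ ∈ couplings ρA ρB, ((C * ρ).trace).re = x}

/-! ### Auxiliary lemmas -/

/-- The key real inequality, a form of weak duality for the Hellinger-type bound. -/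
lemma hell_key {r s x y w m : ℝ} (hr0 : 0 ≤ r) (hr1 : r ≤ 1) (hs0 : 0 ≤ s) (hs1 : s ≤ 1)
    (hw : 0 ≤ w) (hxs : w + x = s) (hyr : w + y = r)
    (hm : ∀ t : ℝ, 0 < t → 2 * t * m ≤ t ^ 2 * x + y) :
    (Real.sqrt r - Real.sqrt s) ^ 2 / 2 ≤ (x + y) / 2 - m := by
  apply le_of_forall_sub_le
  intro ε hε
  set u := Real.sqrt r with hu
  set v := Real.sqrt s with hv
  have hu0 : 0 ≤ u := Real.sqrt_nonneg r
  have hv0 : 0 ≤ v := Real.sqrt_nonneg s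
  have hu1 : u ≤ 1 := Real.sqrt_le_one.mpr hr1
  have hv1 : v ≤ 1 := Real.sqrt_le_one.mpr hs1
  have hu2 : u ^ 2 = r := Real.sq_sqrt hr0
  have hv2 : v ^ 2 = s := Real.sq_sqrt hs0
  have hA : 0 < u + ε := by linarith
  have hB : 0 < v + ε := by linarith
  have hB2 : (0:ℝ) < (v + ε)^2 := by positivity
  have ht := hm ((u + ε) / (v + ε)) (by positivity)
  rw [div_pow] at ht
  have h2 : 2 * (u + ε) * (v + ε) * m ≤ (u + ε) ^ 2 * x + (v + ε) ^ 2 * y := by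
    have h3 := mul_le_mul_of_nonneg_left ht hB2.le
    calc 2 * (u + ε) * (v + ε) * m
        = (v + ε)^2 * (2 * ((u + ε) / (v + ε)) * m) := by field_simp
      _ ≤ (v + ε)^2 * ((u + ε)^2 / (v + ε)^2 * x + y) := h3
      _ = (u + ε)^2 * x + (v + ε)^2 * y := by field_simp
  have hx2 : x = v ^ 2 - w := by linarith [hv2]
  have hy2 : y = u ^ 2 - w := by linarith [hu2]
  have key : ((u + ε) * (v + ε)) * ((u - v) ^ 2) ≤ ((u + ε) * (v + ε)) * (x + y - 2*m + 2*ε) := by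
    nlinarith [h2, mul_nonneg hw (sq_nonneg (u - v)), mul_nonneg (mul_nonneg hε.le hu0) hv0,
      mul_nonneg hu0 hv0, sq_nonneg (u - v), mul_nonneg hε.le (mul_nonneg hε.le hε.le),
      mul_nonneg hε.le hu0, mul_nonneg hε.le hv0, mul_nonneg (mul_nonneg hε.le hε.le) hu0,
      mul_nonneg (mul_nonneg hε.le hε.le) hv0]
  have key2 : (u - v) ^ 2 ≤ x + y - 2*m + 2*ε :=
    (mul_le_mul_iff_right₀ (mul_pos hA hB)).mp key
  linarith

abbrev q00 : Fin 2 × Fin 2 := (0, 0)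
abbrev q01 : Fin 2 × Fin 2 := (0, 1)
abbrev q10 : Fin 2 × Fin 2 := (1, 0)
abbrev q11 : Fin 2 × Fin 2 := (1, 1)

lemma quad_re {ρ : Matrix (Fin 2 × Fin 2) (Fin 2 × Fin 2) ℂ} (h : ρ.PosSemidef)
    (v : Fin 2 × Fin 2 → ℂ) : 0 ≤ (dotProduct (star v) (ρ *ᵥ v)).re := by
  have := h.dotProduct_mulVec_nonneg v
  rw [Complex.le_def] at this
  simpa using this.1

lemma diag_re_nonneg {ρ : Matrix (Fin 2 × Fin 2) (Fin 2 × Fin 2) ℂ} (h : ρ.PosSemidef)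
    (p : Fin 2 × Fin 2) : 0 ≤ (ρ p p).re := by
  have := quad_re h (fun q => if q = p then 1 else 0)
  obtain ⟨i, j⟩ := p
  fin_cases i <;> fin_cases j <;>
    simpa [dotProduct, mulVec, Fintype.sum_prod_type, Fin.sum_univ_two, Prod.ext_iff] using this

lemma offdiag_bound {ρ : Matrix (Fin 2 × Fin 2) (Fin 2 × Fin 2) ℂ} (h : ρ.PosSemidef)
    (t : ℝ) (ht : 0 < t) :
    2 * t * (ρ q01 q10).re ≤ t ^ 2 * (ρ q01 q01).re + (ρ q10 q10).re := by
  have hc : (ρ q10 q01).re = (ρ q01 q10).re := by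
    have := h.1.apply q01 q10
    rw [← this]
    simp
  have h2 := quad_re h (fun p => if p = q01 then (t : ℂ) else if p = q10 then -1 else 0)
  simp [dotProduct, mulVec, Fintype.sum_prod_type, Fin.sum_univ_two, Prod.ext_iff,
    Complex.add_re, Complex.mul_re] at h2
  nlinarith [h2]

lemma trace_formula (ρ : Matrix (Fin 2 × Fin 2) (Fin 2 × Fin 2) ℂ) (h : ρ.IsHermitian) :
    ((projCost 2 * ρ).trace).re
      = ((ρ q01 q01).re + (ρ q10 q10).re) / 2 - (ρ q01 q10).re := by
  have hc : (ρ q10 q01).re = (ρ q01 q10).re := by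
    have := h.apply q01 q10
    rw [← this]; simp
  have htr : (projCost 2 * ρ).trace = (1/2 : ℂ) * (ρ q01 q01 + ρ q10 q10
      - ρ q01 q10 - ρ q10 q01) := by
    simp [projCost, swapOp, Matrix.trace, Matrix.mul_apply, Matrix.diag, Fintype.sum_prod_type,
      Fin.sum_univ_two, Matrix.sub_apply, Matrix.one_apply, Prod.ext_iff]
    ring
  rw [htr]
  simp [Complex.mul_re, Complex.add_re, Complex.sub_re]
  rw [hc]; ring

lemma product_coupling_mem (r s : ℝ) (hr : r ∈ Set.Icc (0:ℝ) 1) (hs : s ∈ Set.Icc (0:ℝ) 1) :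
    Matrix.diagonal (fun p : Fin 2 × Fin 2 => ((![s, 1-s] p.1 * ![r, 1-r] p.2 : ℝ) : ℂ))
      ∈ couplings (Matrix.diagonal ![(s : ℂ), 1 - s]) (Matrix.diagonal ![(r : ℂ), 1 - r]) := by
  obtain ⟨hr0, hr1⟩ := hr
  obtain ⟨hs0, hs1⟩ := hs
  refine ⟨⟨Matrix.PosSemidef.diagonal fun p => ?_, ?_⟩, ?_, ?_⟩
  · simp only [Pi.zero_apply]
    rw [Complex.zero_le_real]
    obtain ⟨i, j⟩ := p
    fin_cases i <;> fin_cases j <;> simp <;> nlinarith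
  · simp [Matrix.trace, Matrix.diag, Matrix.diagonal, Fintype.sum_prod_type, Fin.sum_univ_two]
    push_cast
    ring
  · ext i j
    fin_cases i <;> fin_cases j <;>
      simp [ptraceB, Matrix.diagonal, Fin.sum_univ_two, Prod.ext_iff, Fin.ext_iff] <;>
      push_cast <;> ring
  · ext i j
    fin_cases i <;> fin_cases j <;>
      simp [ptraceA, Matrix.diagonal, Fin.sum_univ_two, Prod.ext_iff, Fin.ext_iff] <;>
      push_cast <;> ring

theorem TQ_commuting_qubits_lower_bound (r s : ℝ)
    (hr : r ∈ Set.Icc (0 : ℝ) 1) (hs : s ∈ Set.Icc (0 : ℝ) 1) :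
    TQ (projCost 2)
        (Matrix.diagonal ![(s : ℂ), 1 - s]) (Matrix.diagonal ![(r : ℂ), 1 - r]) ≥
      (1 / 2) * max ((Real.sqrt r - Real.sqrt s) ^ 2)
        ((Real.sqrt (1 - r) - Real.sqrt (1 - s)) ^ 2) := by
  obtain ⟨hr0, hr1⟩ := hr
  obtain ⟨hs0, hs1⟩ := hs
  rw [ge_iff_le, TQ]
  apply le_csInf
  · exact ⟨_, Matrix.diagonal (fun p : Fin 2 × Fin 2 => ((![s, 1-s] p.1 * ![r, 1-r] p.2 : ℝ) : ℂ)),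
      product_coupling_mem r s ⟨hr0, hr1⟩ ⟨hs0, hs1⟩, rfl⟩
  · rintro z ⟨ρ, ⟨⟨hPSD, _⟩, hMB, hMA⟩, rfl⟩
    set w := (ρ q00 q00).re
    set x := (ρ q01 q01).re
    set y := (ρ q10 q10).re
    set zz := (ρ q11 q11).re
    set m := (ρ q01 q10).re
    have hw : 0 ≤ w := diag_re_nonneg hPSD q00
    have hz : 0 ≤ zz := diag_re_nonneg hPSD q11
    -- marginal equations
    have e1 : w + x = s := by
      have h := congrArg Complex.re (congrFun (congrFun hMB 0) 0)
      simpa [ptraceB, Fin.sum_univ_two, Matrix.diagonal] using h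
    have e2 : y + zz = 1 - s := by
      have h := congrArg Complex.re (congrFun (congrFun hMB 1) 1)
      simpa [ptraceB, Fin.sum_univ_two, Matrix.diagonal, Complex.sub_re] using h
    have e3 : w + y = r := by
      have h := congrArg Complex.re (congrFun (congrFun hMA 0) 0)
      simpa [ptraceA, Fin.sum_univ_two, Matrix.diagonal] using h
    have e4 : x + zz = 1 - r := by
      have h := congrArg Complex.re (congrFun (congrFun hMA 1) 1)
      simpa [ptraceA, Fin.sum_univ_two, Matrix.diagonal, Complex.sub_re] using h
    have hmm : ∀ t : ℝ, 0 < t → 2 * t * m ≤ t ^ 2 * x + y :=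
      fun t ht => offdiag_bound hPSD t ht
    have htr : ((projCost 2 * ρ).trace).re = (x + y) / 2 - m :=
      trace_formula ρ hPSD.1
    rw [htr]
    have b1 : (Real.sqrt r - Real.sqrt s) ^ 2 / 2 ≤ (x + y) / 2 - m :=
      hell_key hr0 hr1 hs0 hs1 hw e1 e3 hmm
    have b2 : (Real.sqrt (1 - r) - Real.sqrt (1 - s)) ^ 2 / 2 ≤ (x + y) / 2 - m := by
      have h := hell_key (r := 1 - s) (s := 1 - r) (x := x) (y := y) (w := zz) (m := m)
        (by linarith) (by linarith) (by linarith) (by linarith) hz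
        (by linarith) (by linarith) hmm
      have heq : (Real.sqrt (1 - r) - Real.sqrt (1 - s)) ^ 2
          = (Real.sqrt (1 - s) - Real.sqrt (1 - r)) ^ 2 := by ring
      rw [heq]
      exact h
    rcases max_cases ((Real.sqrt r - Real.sqrt s) ^ 2)
        ((Real.sqrt (1 - r) - Real.sqrt (1 - s)) ^ 2) with ⟨h1, _⟩ | ⟨h1, _⟩ <;>
      rw [h1] <;> linarith
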